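/- Let B be an exact Krull–Schmidt Frobenius k-category whose stable category B̄ has finite-dimensional Hom-spaces, and let C be a functorially finite maximal (d−1)-orthogonal subcategory with d ≥ 2 and C̄[d] = C̄. Then for M ∈ mod-C̄ with M ≅ B̄(−,X) as in the presentation of Proposition 2.4(1), the induced sequence 0 → B̄(−,ΩX) → B̄(−,C₁) → B̄(−,C₀) → M → 0 is an exact sequence of functors on C̄, giving a projective presentation of M in mod-C̄. -/

import Mathlib

open CategoryTheory CategoryTheory.Limits

universe v u

/-- Bundled data of an exact Krull–Schmidt Frobenius `k`-category: an additive
`k`-linear category equipped with a class of admissible short exact sequences,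
a class of projective(-injective) objects satisfying the usual lifting
properties on both sides (the Frobenius property), chosen projective covers
with syzygies and injective envelopes with cosyzygies (enough projectives and
enough injectives), the Krull--Schmidt property, and Hom-finiteness of the
stable category (Hom's modulo maps factoring through projectives). -/
structure FrobeniusSetup (k : Type) [Field k] (B : Type u) [Category.{v} B] [Preadditive B]
    [CategoryTheory.Linear k B] [HasFiniteBiproducts B] [HasBinaryBiproducts B] : Type (max u v) where
  /-- the admissible short exact sequences `0 → X → Y → Z → 0` of the exact structure -/
  IsSES : ∀ {X Y Z : B}, (X ⟶ Y) → (Y ⟶ Z) → Prop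
  /-- the projective (equivalently injective) objects -/
  Proj : B → Prop
  ses_zero : ∀ {X Y Z : B} (f : X ⟶ Y) (g : Y ⟶ Z), IsSES f g → f ≫ g = 0
  /-- in an admissible short exact sequence, `f` is a kernel of `g` -/
  ses_ker : ∀ {X Y Z : B} (f : X ⟶ Y) (g : Y ⟶ Z), IsSES f g →
      ∀ {W : B} (u : W ⟶ Y), u ≫ g = 0 → ∃! v : W ⟶ X, v ≫ f = u
  /-- in an admissible short exact sequence, `g` is a cokernel of `f` -/
  ses_coker : ∀ {X Y Z : B} (f : X ⟶ Y) (g : Y ⟶ Z), IsSES f g →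
      ∀ {W : B} (u : Y ⟶ W), f ≫ u = 0 → ∃! v : Z ⟶ W, g ≫ v = u
  /-- admissible short exact sequences are closed under isomorphism -/
  ses_iso : ∀ {X Y Z X' Y' Z' : B} (f : X ⟶ Y) (g : Y ⟶ Z)
      (iX : X ≅ X') (iY : Y ≅ Y') (iZ : Z ≅ Z') (f' : X' ⟶ Y') (g' : Y' ⟶ Z'),
      IsSES f g → f ≫ iY.hom = iX.hom ≫ f' → g ≫ iZ.hom = iY.hom ≫ g' → IsSES f' g'
  /-- split exact sequences are admissible -/
  ses_split : ∀ X Y : B, IsSES (biprod.inl : X ⟶ X ⊞ Y) (biprod.snd : X ⊞ Y ⟶ Y)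
  /-- the `Proj` objects are precisely the projective objects of the exact structure -/
  proj_iff : ∀ P : B, Proj P ↔
      (∀ {X Y Z : B} (f : X ⟶ Y) (g : Y ⟶ Z), IsSES f g →
        ∀ h : P ⟶ Z, ∃ l : P ⟶ Y, l ≫ g = h)
  /-- the Frobenius property: `Proj` objects are precisely the injective objects -/
  inj_iff : ∀ P : B, Proj P ↔
      (∀ {X Y Z : B} (f : X ⟶ Y) (g : Y ⟶ Z), IsSES f g →
        ∀ h : X ⟶ P, ∃ l : Y ⟶ P, f ≫ l = h)
  /-- a chosen projective cover (enough projectives) -/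
  P : B → B
  projP : ∀ X : B, Proj (P X)
  pr : ∀ X : B, P X ⟶ X
  /-- the chosen syzygy -/
  syz : B → B
  syzMono : ∀ X : B, syz X ⟶ P X
  ses_syz : ∀ X : B, IsSES (syzMono X) (pr X)
  /-- a chosen injective envelope (enough injectives) -/
  I : B → B
  projI : ∀ X : B, Proj (I X)
  en : ∀ X : B, X ⟶ I X
  /-- the chosen cosyzygy, i.e. the suspension of the stable category -/
  cosyz : B → B
  cosyzEpi : ∀ X : B, I X ⟶ cosyz X
  ses_cosyz : ∀ X : B, IsSES (en X) (cosyzEpi X)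
  /-- the Krull–Schmidt property: every object is a finite biproduct of objects
  with local endomorphism rings -/
  krullSchmidt : ∀ X : B, ∃ (n : ℕ) (Y : Fin n → B),
      (∀ i, IsLocalRing (End (Y i))) ∧ Nonempty (X ≅ ⨁ Y)
  /-- Hom-finiteness of the stable category -/
  homFinite : ∀ X Y : B, FiniteDimensional k
      ((X ⟶ Y) ⧸ Submodule.span k
        {f : X ⟶ Y | ∃ (Q : B) (g : X ⟶ Q) (h : Q ⟶ Y), Proj Q ∧ f = g ≫ h})

namespace FrobeniusSetup

variable {k : Type} [Field k] {B : Type u} [Category.{v} B] [Preadditive B]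
  [CategoryTheory.Linear k B] [HasFiniteBiproducts B] [HasBinaryBiproducts B] (S : FrobeniusSetup k B)

/-- The ideal of maps factoring through a projective object. -/
def projIdeal (X Y : B) : Submodule k (X ⟶ Y) :=
  Submodule.span k {f : X ⟶ Y | ∃ (Q : B) (g : X ⟶ Q) (h : Q ⟶ Y), S.Proj Q ∧ f = g ≫ h}

/-- Stable Hom: morphisms in the stable category `B̄`. -/
def sHom (X Y : B) : Type v := (X ⟶ Y) ⧸ S.projIdeal X Y

noncomputable instance (X Y : B) : AddCommGroup (S.sHom X Y) :=
  inferInstanceAs (AddCommGroup ((X ⟶ Y) ⧸ S.projIdeal X Y))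

noncomputable instance (X Y : B) : Module k (S.sHom X Y) :=
  inferInstanceAs (Module k ((X ⟶ Y) ⧸ S.projIdeal X Y))

/-- The class of a morphism in the stable category. -/
def sMk {X Y : B} (f : X ⟶ Y) : S.sHom X Y := Submodule.Quotient.mk f

/-- Vanishing of the stable Hom-space `B̄(X,Y)`. -/
def sVanish (X Y : B) : Prop := S.projIdeal X Y = ⊤

/-- `X` and `Y` are isomorphic in the stable category `B̄`. -/
def StIso (X Y : B) : Prop :=
  ∃ (f : X ⟶ Y) (g : Y ⟶ X),
    f ≫ g - 𝟙 X ∈ S.projIdeal X X ∧ g ≫ f - 𝟙 Y ∈ S.projIdeal Y Y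

/-- The shift (suspension) `X[n]` in the stable category: iterated cosyzygies for
`n ≥ 0` and iterated syzygies for `n < 0`. -/
def shift : ℤ → B → B
  | Int.ofNat n, X => S.cosyz^[n] X
  | Int.negSucc n, X => S.syz^[n + 1] X

/-- `Ext^i_B(X,Y) = 0`, expressed via the standard identification
`Ext^i(X,Y) ≅ B̄(Ω^i X, Y)` for `i ≥ 1` valid in a Frobenius category. -/
def extVanish (i : ℕ) (X Y : B) : Prop := S.sVanish (S.syz^[i] X) Y

/-- `C` is a maximal `(d-1)`-orthogonal subcategory of `B`. -/
def MaxOrthogonal (C : Set B) (d : ℕ) : Prop :=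
  (∀ X : B, X ∈ C ↔ ∀ i : ℕ, 1 ≤ i → i < d → ∀ C₀ ∈ C, S.extVanish i X C₀) ∧
  (∀ Y : B, Y ∈ C ↔ ∀ i : ℕ, 1 ≤ i → i < d → ∀ C₀ ∈ C, S.extVanish i C₀ Y)

/-- `C` is functorially finite in `B`: every object admits a right and a left
`C`-approximation. -/
def FunctoriallyFinite (_S : FrobeniusSetup k B) (C : Set B) : Prop :=
  (∀ X : B, ∃ C₀ ∈ C, ∃ f : C₀ ⟶ X, ∀ C₁ ∈ C, ∀ g : C₁ ⟶ X, ∃ h : C₁ ⟶ C₀, h ≫ f = g) ∧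
  (∀ X : B, ∃ C₀ ∈ C, ∃ f : X ⟶ C₀, ∀ C₁ ∈ C, ∀ g : X ⟶ C₁, ∃ h : C₀ ⟶ C₁, f ≫ h = g)

/-- The subcategory `E_j = {X | B̄(C, X[i]) = 0 for 1 ≤ i ≤ d-1, i ≠ j}`. -/
def Esub (C : Set B) (d j : ℕ) : Set B :=
  {X : B | ∀ i : ℕ, 1 ≤ i → i ≤ d - 1 → i ≠ j → ∀ C₀ ∈ C, S.sVanish C₀ (S.cosyz^[i] X)}

/-- `C̄[d] = C̄`: the `d`-th syzygy of every object of `C` again lies in `C`,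
up to stable isomorphism (i.e. up to projective summands). -/
def ShiftStable (C : Set B) (d : ℕ) : Prop :=
  ∀ C₀ ∈ C, ∃ C₁ ∈ C, S.StIso (S.syz^[d] C₀) C₁

end FrobeniusSetup
namespace FrobeniusSetup

section FunctorCats

variable {k : Type} [Field k] {B : Type u} [Category.{v} B] [Preadditive B]
  [CategoryTheory.Linear k B] [HasFiniteBiproducts B] [HasBinaryBiproducts B]
  (S : FrobeniusSetup k B)

/-- Postcomposition on stable Hom's. -/
noncomputable def sComp (X : B) {Y Z : B} (w : Y ⟶ Z) : S.sHom X Y →ₗ[k] S.sHom X Z :=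
  Submodule.mapQ _ _ (Linear.rightComp k X w) (by
    simp only [projIdeal, Submodule.span_le]
    rintro f ⟨Q, g, h, hQ, rfl⟩
    exact Submodule.mem_comap.2 (Submodule.subset_span ⟨Q, g, h ≫ w, hQ, by simp⟩))

/-- Precomposition on stable Hom's. -/
noncomputable def sPre {W X : B} (u : W ⟶ X) (Y : B) : S.sHom X Y →ₗ[k] S.sHom W Y :=
  Submodule.mapQ _ _ (Linear.leftComp k Y u) (by
    simp only [projIdeal, Submodule.span_le]
    rintro f ⟨Q, g, h, hQ, rfl⟩
    exact Submodule.mem_comap.2 (Submodule.subset_span ⟨Q, u ≫ g, h, hQ, by simp⟩))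

@[simp] lemma sComp_mk (X : B) {Y Z : B} (w : Y ⟶ Z) (f : X ⟶ Y) :
    S.sComp X w (S.sMk f) = S.sMk (f ≫ w) := rfl

@[simp] lemma sPre_mk {W X : B} (u : W ⟶ X) (Y : B) (f : X ⟶ Y) :
    S.sPre u Y (S.sMk f) = S.sMk (u ≫ f) := rfl

variable (CC : Set B)

/-- The restriction to `C` of the representable functor `B(-,X)`; for `X ∈ C`
these are exactly the projective objects of `mod-C`. -/
def LinRep (X : B) : (ObjectProperty.FullSubcategory (· ∈ CC))ᵒᵖ ⥤ ModuleCat k :=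
  (ObjectProperty.ι (· ∈ CC)).op ⋙ (linearYoneda k B).obj X

/-- The natural transformation `B(-,X) ⟶ B(-,Y)` induced by `w : X ⟶ Y`. -/
def lMap {X Y : B} (w : X ⟶ Y) : LinRep (k := k) CC X ⟶ LinRep CC Y :=
  CategoryTheory.Functor.whiskerLeft (ObjectProperty.ι (· ∈ CC)).op
    ((linearYoneda k B).map w)

/-- The restriction to `C̄` of the stable representable functor `B̄(-,X)`. -/
noncomputable def SRep (X : B) : (ObjectProperty.FullSubcategory (· ∈ CC))ᵒᵖ ⥤ ModuleCat k where
  obj c := ModuleCat.of k (S.sHom c.unop.obj X)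
  map {c c'} u := ModuleCat.ofHom (S.sPre (u.unop.hom : c'.unop.obj ⟶ c.unop.obj) X)
  map_id c := by
    ext x
    obtain ⟨f, rfl⟩ := Submodule.Quotient.mk_surjective _ x
    show S.sMk ((𝟙 c.unop.obj : c.unop.obj ⟶ c.unop.obj) ≫ f) = S.sMk f
    rw [Category.id_comp]
  map_comp {c c' c''} u v := by
    ext x
    obtain ⟨f, rfl⟩ := Submodule.Quotient.mk_surjective _ x
    show S.sMk (((v.unop.hom : c''.unop.obj ⟶ c'.unop.obj) ≫
        (u.unop.hom : c'.unop.obj ⟶ c.unop.obj)) ≫ f)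
      = S.sMk ((v.unop.hom : c''.unop.obj ⟶ c'.unop.obj) ≫
        ((u.unop.hom : c'.unop.obj ⟶ c.unop.obj) ≫ f))
    rw [Category.assoc]

/-- The natural transformation `B̄(-,X) ⟶ B̄(-,Y)` induced by `w : X ⟶ Y`. -/
noncomputable def sMap {X Y : B} (w : X ⟶ Y) : S.SRep CC X ⟶ S.SRep CC Y where
  app c := ModuleCat.ofHom (S.sComp c.unop.obj w)
  naturality {c c'} u := by
    ext x
    obtain ⟨f, rfl⟩ := Submodule.Quotient.mk_surjective _ x
    show S.sMk (((u.unop.hom : c'.unop.obj ⟶ c.unop.obj) ≫ f) ≫ w)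
      = S.sMk ((u.unop.hom : c'.unop.obj ⟶ c.unop.obj) ≫ (f ≫ w))
    rw [Category.assoc]

/-- A functor on `C` underlies a functor on the stable category `C̄` iff it kills
all maps factoring through a projective object of `B`. -/
def KillsProj (M : (ObjectProperty.FullSubcategory (· ∈ CC))ᵒᵖ ⥤ ModuleCat k) : Prop :=
  ∀ (c c' : (ObjectProperty.FullSubcategory (· ∈ CC))ᵒᵖ) (u : c ⟶ c'),
    (u.unop.hom : c'.unop.obj ⟶ c.unop.obj) ∈ S.projIdeal c'.unop.obj c.unop.obj → M.map u = 0

/-- `M` is a finitely presented k-linear contravariant functor on the stable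
category `C̄`, i.e. an object of `mod-C̄`: it admits a projective presentation
`B̄(-,C₁) → B̄(-,C₀) → M → 0` by (restricted) stable representables. -/
def IsFPStable (M : (ObjectProperty.FullSubcategory (· ∈ CC))ᵒᵖ ⥤ ModuleCat k) : Prop :=
  ∃ (C₁ C₀ : B), C₁ ∈ CC ∧ C₀ ∈ CC ∧
    ∃ (φ : S.SRep CC C₁ ⟶ S.SRep CC C₀) (ε : S.SRep CC C₀ ⟶ M),
      ∀ c, Function.Surjective (ε.app c) ∧ Function.Exact (φ.app c) (ε.app c)

/-- `M` is a finitely presented k-linear contravariant functor on `C`,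
i.e. an object of `mod-C`. -/
def IsFP (M : (ObjectProperty.FullSubcategory (· ∈ CC))ᵒᵖ ⥤ ModuleCat k) : Prop :=
  ∃ (C₁ C₀ : B), C₁ ∈ CC ∧ C₀ ∈ CC ∧
    ∃ (φ : LinRep (k := k) CC C₁ ⟶ LinRep CC C₀) (ε : LinRep (k := k) CC C₀ ⟶ M),
      ∀ c, Function.Surjective (ε.app c) ∧ Function.Exact (φ.app c) (ε.app c)

end FunctorCats

end FrobeniusSetup

namespace FrobeniusSetup

section Aux

variable {k : Type} [Field k] {B : Type u} [Category.{v} B] [Preadditive B]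
  [CategoryTheory.Linear k B] [HasFiniteBiproducts B] [HasBinaryBiproducts B]
  (S : FrobeniusSetup k B)

lemma proj_biprod {Q₁ Q₂ : B} (h₁ : S.Proj Q₁) (h₂ : S.Proj Q₂) : S.Proj (Q₁ ⊞ Q₂) := by
  rw [S.proj_iff]
  intro X Y Z f g hses h
  obtain ⟨l₁, hl₁⟩ := (S.proj_iff Q₁).1 h₁ f g hses (biprod.inl ≫ h)
  obtain ⟨l₂, hl₂⟩ := (S.proj_iff Q₂).1 h₂ f g hses (biprod.inr ≫ h)
  refine ⟨biprod.desc l₁ l₂, ?_⟩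
  apply biprod.hom_ext' <;> simp [reassoc_of% hl₁, reassoc_of% hl₂, hl₁, hl₂]

/-- The set of maps factoring through a projective, as a submodule. -/
def projIdealSub (A Y : B) : Submodule k (A ⟶ Y) where
  carrier := {f | ∃ (Q : B) (g : A ⟶ Q) (h : Q ⟶ Y), S.Proj Q ∧ f = g ≫ h}
  zero_mem' := ⟨S.P A, 0, 0, S.projP A, by simp⟩
  add_mem' := by
    rintro f₁ f₂ ⟨Q₁, g₁, h₁, hQ₁, rfl⟩ ⟨Q₂, g₂, h₂, hQ₂, rfl⟩
    exact ⟨Q₁ ⊞ Q₂, biprod.lift g₁ g₂, biprod.desc h₁ h₂, S.proj_biprod hQ₁ hQ₂, by simp⟩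
  smul_mem' := by
    rintro a f ⟨Q, g, h, hQ, rfl⟩
    exact ⟨Q, a • g, h, hQ, by rw [Linear.smul_comp]⟩

lemma mem_projIdeal_iff {A Y : B} (p : A ⟶ Y) :
    p ∈ S.projIdeal A Y ↔ ∃ (Q : B) (g : A ⟶ Q) (h : Q ⟶ Y), S.Proj Q ∧ p = g ≫ h := by
  have he : S.projIdeal A Y = S.projIdealSub A Y := by
    apply le_antisymm
    · rw [projIdeal, Submodule.span_le]
      exact fun f hf => hf
    · exact fun f hf => Submodule.subset_span hf
  rw [he]
  exact Iff.rfl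

lemma projIdeal_postcomp {A Y Y' : B} {p : A ⟶ Y} (hp : p ∈ S.projIdeal A Y) (m : Y ⟶ Y') :
    p ≫ m ∈ S.projIdeal A Y' := by
  obtain ⟨Q, g, h, hQ, rfl⟩ := (S.mem_projIdeal_iff _).1 hp
  exact (S.mem_projIdeal_iff _).2 ⟨Q, g, h ≫ m, hQ, by rw [Category.assoc]⟩

lemma projIdeal_precomp {A' A Y : B} {p : A ⟶ Y} (hp : p ∈ S.projIdeal A Y) (m : A' ⟶ A) :
    m ≫ p ∈ S.projIdeal A' Y := by
  obtain ⟨Q, g, h, hQ, rfl⟩ := (S.mem_projIdeal_iff _).1 hp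
  exact (S.mem_projIdeal_iff _).2 ⟨Q, m ≫ g, h, hQ, by rw [Category.assoc]⟩

lemma sVanish_of_proj_src {A Y : B} (hA : S.Proj A) : S.sVanish A Y := by
  rw [sVanish, Submodule.eq_top_iff']
  exact fun f => (S.mem_projIdeal_iff f).2 ⟨A, 𝟙 A, f, hA, (Category.id_comp f).symm⟩

lemma sVanish_of_proj_tgt {A Y : B} (hY : S.Proj Y) : S.sVanish A Y := by
  rw [sVanish, Submodule.eq_top_iff']
  exact fun f => (S.mem_projIdeal_iff f).2 ⟨Y, f, 𝟙 Y, hY, (Category.comp_id f).symm⟩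

lemma pr_epi {A W : B} {x y : A ⟶ W} (h : S.pr A ≫ x = S.pr A ≫ y) : x = y := by
  obtain ⟨vv, hvv, huniq⟩ := S.ses_coker _ _ (S.ses_syz A) (S.pr A ≫ x)
    (by rw [← Category.assoc, S.ses_zero _ _ (S.ses_syz A), zero_comp])
  rw [huniq x rfl, huniq y h.symm]

lemma cosyzEpi_epi {A W : B} {x y : S.cosyz A ⟶ W}
    (h : S.cosyzEpi A ≫ x = S.cosyzEpi A ≫ y) : x = y := by
  obtain ⟨vv, hvv, huniq⟩ := S.ses_coker _ _ (S.ses_cosyz A) (S.cosyzEpi A ≫ x)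
    (by rw [← Category.assoc, S.ses_zero _ _ (S.ses_cosyz A), zero_comp])
  rw [huniq x rfl, huniq y h.symm]

lemma mem_projIdeal_iff_en {A Y : B} (p : A ⟶ Y) :
    p ∈ S.projIdeal A Y ↔ ∃ q : S.I A ⟶ Y, p = S.en A ≫ q := by
  constructor
  · intro hp
    obtain ⟨Q, g, h, hQ, rfl⟩ := (S.mem_projIdeal_iff _).1 hp
    obtain ⟨g', hg'⟩ := (S.inj_iff Q).1 hQ _ _ (S.ses_cosyz A) g
    exact ⟨g' ≫ h, by rw [← Category.assoc, hg']⟩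
  · rintro ⟨q, rfl⟩
    exact (S.mem_projIdeal_iff _).2 ⟨S.I A, S.en A, q, S.projI A, rfl⟩

lemma mem_projIdeal_iff_pr {A Y : B} (p : A ⟶ Y) :
    p ∈ S.projIdeal A Y ↔ ∃ q : A ⟶ S.P Y, p = q ≫ S.pr Y := by
  constructor
  · intro hp
    obtain ⟨Q, g, h, hQ, rfl⟩ := (S.mem_projIdeal_iff _).1 hp
    obtain ⟨l, hl⟩ := (S.proj_iff Q).1 hQ _ _ (S.ses_syz Y) h
    exact ⟨g ≫ l, by rw [Category.assoc, hl]⟩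
  · rintro ⟨q, rfl⟩
    exact (S.mem_projIdeal_iff _).2 ⟨S.P Y, q, S.pr Y, S.projP Y, rfl⟩

lemma proj_mem_C {C : Set B} {d : ℕ} (hmax : S.MaxOrthogonal C d) {Q : B} (hQ : S.Proj Q) :
    Q ∈ C :=
  (hmax.2 Q).2 fun _ _ _ _ _ => S.sVanish_of_proj_tgt hQ

/-- Dimension shift: if all maps `ΩA ⟶ ΩY` are stably trivial then so are all
maps `A ⟶ Y`. -/
lemma syz_step {A Y : B}
    (H : ∀ s' : S.syz A ⟶ S.syz Y, s' ∈ S.projIdeal (S.syz A) (S.syz Y))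
    (s : A ⟶ Y) : s ∈ S.projIdeal A Y := by
  obtain ⟨l, hl⟩ := (S.proj_iff _).1 (S.projP A) _ _ (S.ses_syz Y) (S.pr A ≫ s)
  have h0 : (S.syzMono A ≫ l) ≫ S.pr Y = 0 := by
    rw [Category.assoc, hl, ← Category.assoc, S.ses_zero _ _ (S.ses_syz A), zero_comp]
  obtain ⟨s₁, hs₁, -⟩ := S.ses_ker _ _ (S.ses_syz Y) (S.syzMono A ≫ l) h0
  obtain ⟨Q, α, β, hQ, hfac⟩ := (S.mem_projIdeal_iff s₁).1 (H s₁)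
  obtain ⟨α', hα'⟩ := (S.inj_iff Q).1 hQ _ _ (S.ses_syz A) α
  have e1 : S.syzMono A ≫ (α' ≫ (β ≫ S.syzMono Y)) = S.syzMono A ≫ l := by
    rw [← Category.assoc, hα', ← Category.assoc, ← hfac, hs₁]
  have h1 : S.syzMono A ≫ (l - α' ≫ (β ≫ S.syzMono Y)) = 0 := by
    rw [Preadditive.comp_sub, e1, sub_self]
  obtain ⟨n, hn, -⟩ := S.ses_coker _ _ (S.ses_syz A) _ h1
  have h2 : S.pr A ≫ (n ≫ S.pr Y) = S.pr A ≫ s := by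
    rw [← Category.assoc, hn, Preadditive.sub_comp, hl, Category.assoc, Category.assoc,
      S.ses_zero _ _ (S.ses_syz Y), comp_zero, comp_zero, sub_zero]
  rw [← S.pr_epi h2]
  exact (S.mem_projIdeal_iff_pr _).2 ⟨n, rfl⟩

lemma syz_step_iter (n : ℕ) {A Y : B}
    (H : ∀ s' : S.syz^[n] A ⟶ S.syz^[n] Y, s' ∈ S.projIdeal (S.syz^[n] A) (S.syz^[n] Y))
    (s : A ⟶ Y) : s ∈ S.projIdeal A Y := by
  induction n generalizing A Y with
  | zero => exact H s
  | succ m ih =>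
    refine S.syz_step (fun s' => ih (fun s'' => ?_) s') s
    exact H s''

/-- Dimension shift across the cosyzygy: if all maps `Z ⟶ ΩY` are stably trivial
then so are all maps `Ω⁻¹Z ⟶ Y`. -/
lemma cosyz_step {Z Y : B}
    (H : ∀ s : Z ⟶ S.syz Y, s ∈ S.projIdeal Z (S.syz Y))
    (r : S.cosyz Z ⟶ Y) : r ∈ S.projIdeal (S.cosyz Z) Y := by
  obtain ⟨l, hl⟩ := (S.proj_iff _).1 (S.projI Z) _ _ (S.ses_syz Y) (S.cosyzEpi Z ≫ r)
  have h0 : (S.en Z ≫ l) ≫ S.pr Y = 0 := by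
    rw [Category.assoc, hl, ← Category.assoc, S.ses_zero _ _ (S.ses_cosyz Z), zero_comp]
  obtain ⟨s, hs, -⟩ := S.ses_ker _ _ (S.ses_syz Y) (S.en Z ≫ l) h0
  obtain ⟨s', hs'⟩ := (S.mem_projIdeal_iff_en _).1 (H s)
  have h1 : S.en Z ≫ (l - s' ≫ S.syzMono Y) = 0 := by
    rw [Preadditive.comp_sub, ← Category.assoc, ← hs', hs, sub_self]
  obtain ⟨n, hn, -⟩ := S.ses_coker _ _ (S.ses_cosyz Z) _ h1
  have h2 : S.cosyzEpi Z ≫ (n ≫ S.pr Y) = S.cosyzEpi Z ≫ r := by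
    rw [← Category.assoc, hn, Preadditive.sub_comp, hl, Category.assoc,
      S.ses_zero _ _ (S.ses_syz Y), comp_zero, sub_zero]
  rw [← S.cosyzEpi_epi h2]
  exact (S.mem_projIdeal_iff_pr _).2 ⟨n, rfl⟩

/-- The key vanishing: `B̄(Ω⁻¹Z, C₀) = 0` for `Z, C₀ ∈ C`. -/
lemma key_vanish {C : Set B} {d : ℕ} (hd : 2 ≤ d) (hmax : S.MaxOrthogonal C d)
    (hstab : S.ShiftStable C d) {Z C₀ : B} (hZ : Z ∈ C) (hC₀ : C₀ ∈ C)
    (r : S.cosyz Z ⟶ C₀) : r ∈ S.projIdeal (S.cosyz Z) C₀ := by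
  obtain ⟨m, rfl⟩ : ∃ m, d = m + 2 := ⟨d - 2, by omega⟩
  apply S.cosyz_step
  intro s
  apply S.syz_step_iter (m + 1)
  intro s'
  obtain ⟨C', hC', φ, ψ, hφψ, hψφ⟩ := hstab C₀ hC₀
  have hv : S.sVanish (S.syz^[m + 1] Z) C' :=
    (hmax.1 Z).1 hZ (m + 1) (by omega) (by omega) C' hC'
  -- `s' : syz^[m+1] Z ⟶ syz^[m+1] (syz C₀)` and `syz^[m+1] (syz C₀) = syz^[m+2] C₀` defeq
  have hsφ : s' ≫ φ ∈ S.projIdeal (S.syz^[m + 1] Z) C' := by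
    rw [hv]; trivial
  have gen : ∀ {A Bo Co : B} (a : A ⟶ Bo) (f : Bo ⟶ Co) (g : Co ⟶ Bo),
      a = (a ≫ f) ≫ g - a ≫ (f ≫ g - 𝟙 Bo) := by
    intro A Bo Co a f g
    rw [Preadditive.comp_sub, Category.comp_id, Category.assoc, sub_sub_cancel]
  rw [show s' = (s' ≫ φ) ≫ ψ - s' ≫ (φ ≫ ψ - 𝟙 (S.syz^[m + 2] C₀)) from gen s' φ ψ]
  exact sub_mem (S.projIdeal_postcomp hsφ ψ) (S.projIdeal_precomp hφψ s')

lemma sMk_surjective (X Y : B) :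
    Function.Surjective (S.sMk : (X ⟶ Y) → S.sHom X Y) :=
  Submodule.Quotient.mk_surjective _

lemma sMk_eq_zero {X Y : B} (f : X ⟶ Y) : S.sMk f = 0 ↔ f ∈ S.projIdeal X Y :=
  Submodule.Quotient.mk_eq_zero _

lemma sMk_eq {X Y : B} (f g : X ⟶ Y) : S.sMk f = S.sMk g ↔ f - g ∈ S.projIdeal X Y :=
  Submodule.Quotient.eq _

end Aux

end FrobeniusSetup

open FrobeniusSetup in
/-- Proposition 2.4(2).  Given `M ∈ mod-C̄` together with a
projective presentation `0 → B(-,ΩX) → B(-,C₁) → B(-,C₀) → M → 0` in `mod-C`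
as in Proposition 2.4(1), the induced sequence
`0 → B̄(-,ΩX) → B̄(-,C₁) → B̄(-,C₀) → M → 0` of functors on `C̄` is exact,
i.e. it is a projective presentation of `M` in `mod-C̄`.  Exactness at the spot
`B̄(-,C₀)` is expressed representative-wise: `ε(y) = 0` iff `y` agrees with a
map coming from `C₁` up to a map factoring through a projective. -/
theorem stmt5_induced_stable_presentation_exact
    {k : Type} [Field k] {B : Type u} [Category.{v} B] [Preadditive B]
    [CategoryTheory.Linear k B] [HasFiniteBiproducts B] [HasBinaryBiproducts B]
    (S : FrobeniusSetup k B) (d : ℕ) (hd : 2 ≤ d) (C : Set B)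
    (hff : S.FunctoriallyFinite C) (hmax : S.MaxOrthogonal C d)
    (hstab : S.ShiftStable C d)
    (M : (ObjectProperty.FullSubcategory (· ∈ C))ᵒᵖ ⥤ ModuleCat k) (hM : S.IsFPStable C M)
    (X C₁ C₀ : B) (hC₁ : C₁ ∈ C) (hC₀ : C₀ ∈ C)
    (hiso : Nonempty (M ≅ S.SRep C X))
    (w : S.syz X ⟶ C₁) (v : C₁ ⟶ C₀) (ε : LinRep (k := k) C C₀ ⟶ M)
    (hpres : ∀ c, Function.Injective ((lMap (k := k) C w).app c) ∧
      Function.Exact ((lMap (k := k) C w).app c) ((lMap (k := k) C v).app c) ∧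
      Function.Exact ((lMap (k := k) C v).app c) (ε.app c) ∧
      Function.Surjective (ε.app c)) :
    ∀ c : (ObjectProperty.FullSubcategory (· ∈ C))ᵒᵖ,
      Function.Injective ((S.sMap C w).app c) ∧
      Function.Exact ((S.sMap C w).app c) ((S.sMap C v).app c) ∧
      (∀ y : c.unop.obj ⟶ C₀, ε.app c y = 0 ↔
        ∃ x : c.unop.obj ⟶ C₁, y - x ≫ v ∈ S.projIdeal c.unop.obj C₀) ∧
      Function.Surjective (ε.app c) := by
  classical
  obtain ⟨e⟩ := hiso
  -- Every element of `M` at a projective object vanishes.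
  have hMtriv : ∀ (cq : (ObjectProperty.FullSubcategory (· ∈ C))ᵒᵖ), S.Proj cq.unop.obj →
      ∀ z : M.obj cq, z = 0 := by
    intro cq hQ z
    have hsub : Subsingleton (S.sHom cq.unop.obj X) := by
      have h2 : S.projIdeal cq.unop.obj X = ⊤ := S.sVanish_of_proj_src hQ
      exact (Submodule.Quotient.subsingleton_iff (p := S.projIdeal cq.unop.obj X)).2 h2
    have h1 : e.hom.app cq z = 0 := @Subsingleton.elim _ hsub _ _
    have h3 : e.inv.app cq (e.hom.app cq z) = z :=
      ConcreteCategory.congr_hom (e.hom_inv_id_app cq) z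
    rw [← h3, h1, map_zero]
  -- `ε` vanishes at projective objects of `C`.
  have hεproj : ∀ (cq : (ObjectProperty.FullSubcategory (· ∈ C))ᵒᵖ), S.Proj cq.unop.obj →
      ∀ y : cq.unop.obj ⟶ C₀, ε.app cq y = 0 := fun cq hQ y => hMtriv cq hQ _
  -- `ε` kills maps in the projective ideal.
  have hεideal : ∀ (c : (ObjectProperty.FullSubcategory (· ∈ C))ᵒᵖ) (p : c.unop.obj ⟶ C₀),
      p ∈ S.projIdeal c.unop.obj C₀ → ε.app c p = 0 := by
    intro c p hp
    obtain ⟨Q, g, h, hQ, rfl⟩ := (S.mem_projIdeal_iff _).1 hp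
    have hQC : Q ∈ C := S.proj_mem_C hmax hQ
    let m : c.unop ⟶ (⟨Q, hQC⟩ : ObjectProperty.FullSubcategory (· ∈ C)) := ObjectProperty.homMk g
    have hnat := ε.naturality m.op
    have happ : ε.app c (g ≫ h) = M.map m.op (ε.app (Opposite.op ⟨Q, hQC⟩) h) :=
      ConcreteCategory.congr_hom hnat h
    have hz : ε.app (Opposite.op (⟨Q, hQC⟩ : ObjectProperty.FullSubcategory (· ∈ C))) h = 0 :=
      hεproj (Opposite.op ⟨Q, hQC⟩) hQ h
    rw [happ, hz, map_zero]
  intro c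
  have hZC : c.unop.obj ∈ C := c.unop.property
  obtain ⟨hinj, hex1, hex2, hsurj⟩ := hpres c
  have hIZC : S.I c.unop.obj ∈ C := S.proj_mem_C hmax (S.projI c.unop.obj)
  -- the main stable injectivity statement
  have key : ∀ x : c.unop.obj ⟶ S.syz X, x ≫ w ∈ S.projIdeal c.unop.obj C₁ →
      x ∈ S.projIdeal c.unop.obj (S.syz X) := by
    intro x hx
    obtain ⟨u, hu⟩ := (S.mem_projIdeal_iff_en _).1 hx
    have hzero : (x ≫ w) ≫ v = 0 := hex1.apply_apply_eq_zero x
    have h0 : S.en c.unop.obj ≫ (u ≫ v) = 0 := by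
      rw [← Category.assoc, ← hu, hzero]
    obtain ⟨r, hr, -⟩ := S.ses_coker _ _ (S.ses_cosyz c.unop.obj) (u ≫ v) h0
    have hrid := S.key_vanish hd hmax hstab hZC hC₀ r
    obtain ⟨Q₃, p, q, hQ₃, hrfac⟩ := (S.mem_projIdeal_iff _).1 hrid
    have hQ₃C : Q₃ ∈ C := S.proj_mem_C hmax hQ₃
    obtain ⟨-, -, hex2Q, -⟩ := hpres (Opposite.op ⟨Q₃, hQ₃C⟩)
    obtain ⟨(q' : Q₃ ⟶ C₁), hq'⟩ := (hex2Q q).1 (hεproj (Opposite.op ⟨Q₃, hQ₃C⟩) hQ₃ q)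
    -- hq' : (lMap C v).app _ q' = q, i.e. q' ≫ v = q
    have hq'v : q' ≫ v = q := hq'
    have e2 : (S.cosyzEpi c.unop.obj ≫ (p ≫ q')) ≫ v = u ≫ v := by
      rw [Category.assoc, Category.assoc, hq'v, ← hrfac, hr]
    have hu'v : (u - S.cosyzEpi c.unop.obj ≫ (p ≫ q')) ≫ v = 0 := by
      rw [Preadditive.sub_comp, e2, sub_self]
    obtain ⟨-, hex1I, -, -⟩ := hpres (Opposite.op ⟨S.I c.unop.obj, hIZC⟩)
    obtain ⟨(t : S.I c.unop.obj ⟶ S.syz X), ht⟩ := (hex1I (u - S.cosyzEpi c.unop.obj ≫ (p ≫ q'))).1 hu'v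
    have htw : t ≫ w = u - S.cosyzEpi c.unop.obj ≫ (p ≫ q') := ht
    have hfin : (S.en c.unop.obj ≫ t) ≫ w = x ≫ w := by
      rw [Category.assoc, htw, Preadditive.comp_sub, ← hu, ← Category.assoc,
        S.ses_zero _ _ (S.ses_cosyz c.unop.obj), zero_comp, sub_zero]
    have he : S.en c.unop.obj ≫ t = x := hinj hfin
    rw [← he]
    exact (S.mem_projIdeal_iff_en _).2 ⟨t, rfl⟩
  refine ⟨?_, ?_, ?_, hsurj⟩
  · -- injectivity of the induced map on stable Homs
    intro a b hab
    obtain ⟨xa, rfl⟩ := S.sMk_surjective _ _ a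
    obtain ⟨xb, rfl⟩ := S.sMk_surjective _ _ b
    have hab' : S.sMk (xa ≫ w) = S.sMk (xb ≫ w) := hab
    have hmem : (xa - xb) ≫ w ∈ S.projIdeal c.unop.obj C₁ := by
      rw [Preadditive.sub_comp]
      exact (S.sMk_eq _ _).1 hab'
    exact (S.sMk_eq _ _).2 (key _ hmem)
  · -- exactness at `B̄(-, C₁)`
    intro y
    obtain ⟨x, rfl⟩ := S.sMk_surjective _ _ y
    constructor
    · intro hy
      have hxv : x ≫ v ∈ S.projIdeal c.unop.obj C₀ := by
        have : S.sMk (x ≫ v) = 0 := hy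
        exact (S.sMk_eq_zero _).1 this
      obtain ⟨e₀, he₀⟩ := (S.mem_projIdeal_iff_en _).1 hxv
      obtain ⟨-, -, hex2I, -⟩ := hpres (Opposite.op ⟨S.I c.unop.obj, hIZC⟩)
      obtain ⟨(e' : S.I c.unop.obj ⟶ C₁), he'⟩ := (hex2I e₀).1
        (hεproj (Opposite.op ⟨S.I c.unop.obj, hIZC⟩) (S.projI c.unop.obj) e₀)
      have he'v : e' ≫ v = e₀ := he'
      have hsub : (x - S.en c.unop.obj ≫ e') ≫ v = 0 := by
        rw [Preadditive.sub_comp, Category.assoc, he'v, ← he₀, sub_self]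
      obtain ⟨z, hz⟩ := (hex1 (x - S.en c.unop.obj ≫ e')).1 hsub
      have hzw : z ≫ w = x - S.en c.unop.obj ≫ e' := hz
      refine ⟨S.sMk z, ?_⟩
      have : S.sMk (z ≫ w) = S.sMk x := by
        rw [(S.sMk_eq _ _), hzw, sub_sub_cancel_left, neg_mem_iff]
        exact (S.mem_projIdeal_iff_en _).2 ⟨e', rfl⟩
      exact this
    · rintro ⟨z0, hz0⟩
      obtain ⟨z, rfl⟩ := S.sMk_surjective _ _ z0
      have hz0' : S.sMk (z ≫ w) = S.sMk x := hz0
      have hcomp : (z ≫ w) ≫ v = 0 := hex1.apply_apply_eq_zero z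
      have hmem : x - z ≫ w ∈ S.projIdeal c.unop.obj C₁ := (S.sMk_eq _ _).1 hz0'.symm
      have hxv : x ≫ v ∈ S.projIdeal c.unop.obj C₀ := by
        have h4 : x ≫ v = (x - z ≫ w) ≫ v := by
          rw [Preadditive.sub_comp, hcomp, sub_zero]
        rw [h4]
        exact S.projIdeal_postcomp hmem v
      exact (S.sMk_eq_zero _).2 hxv
  · -- exactness at `B̄(-, C₀)`, representative-wise
    intro y
    constructor
    · intro hy
      obtain ⟨x, hx⟩ := (hex2 y).1 hy
      have hx' : x ≫ v = y := hx
      exact ⟨x, by rw [hx', sub_self]; exact zero_mem _⟩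
    · rintro ⟨x, hxv⟩
      have h1 : ε.app c (y - x ≫ v) = 0 := hεideal c _ hxv
      have h2 : ε.app c (x ≫ v) = 0 := (hex2 (x ≫ v)).2 ⟨x, rfl⟩
      have h3 : y = (y - x ≫ v) + x ≫ v := by abel
      rw [h3]; exact (map_add (ε.app c).hom (y - x ≫ v) (x ≫ v)).trans ((congrArg₂ (· + ·) h1 h2).trans (add_zero _))
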